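/- arXiv:1604.02180 — 2 statements merged into one kernel-verified Lean document; each statement's English description precedes it below -/
import Mathlib

section
/- Let R be a finite index set and let (L_r)_{r∈R} be mutually independent nonnegative real-valued random variables on a common probability space with 0 ≤ L_r ≤ M_r almost surely for constants M_r ≥ 0. Let d > 0, let 0 < ε < 1, and let m_r be constants with 0 < m_r ≤ ε·d for every r ∈ R, and suppose E[∑_{r∈R} L_r] ≤ d. Set Δ := ∑_{r∈R} (M_r / m_r)². Then for every real N ≥ 1, P( ∑_{r∈R} L_r ≥ (1 + ε·√(2·(log N)·Δ))·d ) ≤ N^{−4}. -/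
open MeasureTheory ProbabilityTheory

section Auxiliary

open Real


lemma hoeffding_scalar {p : ℝ} (hp0 : 0 ≤ p) (hp1 : p ≤ 1) (h : ℝ) :
    1 - p + p * Real.exp h ≤ Real.exp (p * h + h ^ 2 / 8) := by
  have hD : ∀ x : ℝ, 0 < 1 - p + p * Real.exp x := by
    intro x
    rcases lt_or_eq_of_le hp1 with h1 | h1
    · have := (exp_pos x).le
      nlinarith
    · simp [← h1]; positivity
  set g : ℝ → ℝ := fun x => p * x + x ^ 2 / 8 - Real.log (1 - p + p * Real.exp x) with hg
  set φ : ℝ → ℝ := fun x => p + x / 4 - p * Real.exp x / (1 - p + p * Real.exp x) with hφ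
  have hgd : ∀ x, HasDerivAt g (φ x) x := by
    intro x
    have hDd : HasDerivAt (fun x => 1 - p + p * Real.exp x) (p * Real.exp x) x := by
      simpa using (((Real.hasDerivAt_exp x).const_mul p).const_add (1 - p))
    have hlog := hDd.log (hD x).ne'
    have h1 : HasDerivAt (fun x : ℝ => p * x) p x := by
      simpa using (hasDerivAt_id x).const_mul p
    have h2 : HasDerivAt (fun x : ℝ => x ^ 2 / 8) (x / 4) x := by
      have := (hasDerivAt_pow 2 x).div_const 8
      simpa [hφ] using this.congr_deriv (by ring)
    exact (h1.add h2).sub hlog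
  have hφd : ∀ x, HasDerivAt φ (1 / 4 - p * (1 - p) * Real.exp x / (1 - p + p * Real.exp x) ^ 2) x := by
    intro x
    have hDd : HasDerivAt (fun x => 1 - p + p * Real.exp x) (p * Real.exp x) x := by
      simpa using (((Real.hasDerivAt_exp x).const_mul p).const_add (1 - p))
    have hnum : HasDerivAt (fun x => p * Real.exp x) (p * Real.exp x) x :=
      (Real.hasDerivAt_exp x).const_mul p
    have hdiv := hnum.div hDd (hD x).ne'
    have h2 : HasDerivAt (fun x : ℝ => p + x / 4) (1 / 4) x := by
      simpa using ((hasDerivAt_id x).div_const 4).const_add p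
    have := h2.sub hdiv
    refine this.congr_deriv ?_
    have := (hD x).ne'
    ring
  have hφmono : Monotone φ := by
    apply monotone_of_deriv_nonneg (fun x => (hφd x).differentiableAt)
    intro x
    rw [(hφd x).deriv]
    have hex := exp_pos x
    have key : 4 * (p * (1 - p) * Real.exp x) ≤ (1 - p + p * Real.exp x) ^ 2 := by
      nlinarith [sq_nonneg (1 - p - p * Real.exp x)]
    have hD2 : (0:ℝ) < (1 - p + p * Real.exp x) ^ 2 := pow_pos (hD x) 2
    rw [sub_nonneg, div_le_iff₀ hD2]
    linarith
  have hφ0 : φ 0 = 0 := by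
    simp [hφ]
  have hg0 : g 0 = 0 := by simp [hg]
  have hgnn : 0 ≤ g h := by
    rcases lt_trichotomy h 0 with hh | hh | hh
    · obtain ⟨c, hc, hceq⟩ := exists_hasDerivAt_eq_slope g φ hh
        (fun x _ => (hgd x).continuousAt.continuousWithinAt) (fun x _ => hgd x)
      have hφc : φ c ≤ 0 := hφ0 ▸ hφmono hc.2.le
      have : (g 0 - g h) / (0 - h) ≤ 0 := hceq ▸ hφc
      rw [hg0] at this
      have hpos : (0:ℝ) < 0 - h := by linarith
      rcases div_nonpos_iff.mp this with ⟨_, h2⟩ | ⟨h2, _⟩ <;> linarith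
    · simp [hh, hg0]
    · obtain ⟨c, hc, hceq⟩ := exists_hasDerivAt_eq_slope g φ hh
        (fun x _ => (hgd x).continuousAt.continuousWithinAt) (fun x _ => hgd x)
      have hφc : 0 ≤ φ c := hφ0 ▸ hφmono hc.1.le
      have : 0 ≤ (g h - g 0) / (h - 0) := hceq ▸ hφc
      rcases div_nonneg_iff.mp this with ⟨h2, _⟩ | ⟨_, h2⟩ <;> linarith
  have : Real.log (1 - p + p * Real.exp h) ≤ p * h + h ^ 2 / 8 := by
    have := hgnn
    simp only [hg, sub_nonneg] at this
    linarith
  calc 1 - p + p * Real.exp h = Real.exp (Real.log (1 - p + p * Real.exp h)) :=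
        (Real.exp_log (hD h)).symm
    _ ≤ _ := Real.exp_le_exp.mpr this

lemma mgf_le_hoeffding {Ω : Type*} [MeasurableSpace Ω] {μ : Measure Ω} [IsProbabilityMeasure μ]
    {X : Ω → ℝ} (hX : Measurable X) {M : ℝ} (hM : 0 ≤ M)
    (hb : ∀ᵐ ω ∂μ, 0 ≤ X ω ∧ X ω ≤ M) (t : ℝ) :
    mgf X μ t ≤ Real.exp (t * ∫ ω, X ω ∂μ + t ^ 2 * M ^ 2 / 8) := by
  have hXint : Integrable X μ := by
    refine (integrable_const M).mono' hX.aestronglyMeasurable ?_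
    filter_upwards [hb] with ω ⟨h0, h1⟩
    rw [Real.norm_eq_abs, abs_of_nonneg h0]; exact h1
  rcases eq_or_lt_of_le hM with hM0 | hM0
  · have hX0 : ∀ᵐ ω ∂μ, X ω = 0 := by
      filter_upwards [hb] with ω ⟨h0, h1⟩
      rw [← hM0] at h1; linarith
    have h1 : mgf X μ t = 1 := by
      rw [mgf]
      rw [integral_congr_ae (g := fun _ => (1:ℝ)) (by filter_upwards [hX0] with ω h; simp [h])]
      simp
    have h2 : ∫ ω, X ω ∂μ = 0 := by
      rw [integral_congr_ae (g := fun _ => (0:ℝ)) hX0]; simp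
    rw [h1, h2, ← hM0]
    simp
  -- main case M > 0
  set p : ℝ := (∫ ω, X ω ∂μ) / M with hp
  have hIX0 : 0 ≤ ∫ ω, X ω ∂μ :=
    integral_nonneg_of_ae (by filter_upwards [hb] with ω h; exact h.1)
  have hIXM : ∫ ω, X ω ∂μ ≤ M := by
    calc ∫ ω, X ω ∂μ ≤ ∫ _, M ∂μ :=
          integral_mono_ae hXint (integrable_const M) (by filter_upwards [hb] with ω h; exact h.2)
      _ = M := by simp
  have hp0 : 0 ≤ p := div_nonneg hIX0 hM
  have hp1 : p ≤ 1 := (div_le_one hM0).mpr hIXM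
  have hptwise : ∀ᵐ ω ∂μ, Real.exp (t * X ω) ≤ 1 + (Real.exp (t * M) - 1) / M * X ω := by
    filter_upwards [hb] with ω ⟨h0, h1⟩
    have hθ0 : 0 ≤ X ω / M := div_nonneg h0 hM
    have hθ1 : X ω / M ≤ 1 := (div_le_one hM0).mpr h1
    have hcv := convexOn_exp.2 (Set.mem_univ (0:ℝ)) (Set.mem_univ (t * M))
      (sub_nonneg.mpr hθ1) hθ0 (by ring)
    simp only [smul_eq_mul, mul_zero, Real.exp_zero, mul_one] at hcv
    have harg : 0 + X ω / M * (t * M) = t * X ω := by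
      field_simp; ring
    rw [harg] at hcv
    calc Real.exp (t * X ω) ≤ 1 - X ω / M + X ω / M * Real.exp (t * M) := hcv
      _ = 1 + (Real.exp (t * M) - 1) / M * X ω := by field_simp; ring
  have hintexp : Integrable (fun ω => Real.exp (t * X ω)) μ := by
    refine (integrable_const (Real.exp (|t| * M))).mono'
      ((hX.const_mul t).exp.aestronglyMeasurable) ?_
    filter_upwards [hb] with ω ⟨h0, h1⟩
    rw [Real.norm_eq_abs, abs_of_pos (Real.exp_pos _), Real.exp_le_exp]
    calc t * X ω ≤ |t| * X ω := mul_le_mul_of_nonneg_right (le_abs_self t) h0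
      _ ≤ |t| * M := mul_le_mul_of_nonneg_left h1 (abs_nonneg t)
  have hbound : mgf X μ t ≤ 1 - p + p * Real.exp (t * M) := by
    calc mgf X μ t ≤ ∫ ω, (1 + (Real.exp (t * M) - 1) / M * X ω) ∂μ :=
          integral_mono_ae hintexp ((integrable_const 1).add (hXint.const_mul _)) hptwise
      _ = 1 + (Real.exp (t * M) - 1) / M * ∫ ω, X ω ∂μ := by
          rw [integral_add (integrable_const 1) (hXint.const_mul _), integral_const,
            integral_const_mul]
          simp
      _ = 1 - p + p * Real.exp (t * M) := by
          rw [hp]; field_simp; ring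
  refine hbound.trans ((hoeffding_scalar hp0 hp1 (t * M)).trans (le_of_eq ?_))
  congr 1
  rw [hp]
  field_simp

end Auxiliary

/-- Sharpened node capacity violation bound under the stronger demand assumption
`m r ≤ ε * d` with `0 < ε < 1`: the probability of exceeding
`(1 + ε √(2 (log N) Δ)) d` is at most `N⁻⁴`. -/
theorem node_capacity_violation_eps {Ω : Type*} [MeasurableSpace Ω] (μ : Measure Ω)
    [IsProbabilityMeasure μ]
    {R : Type*} [Fintype R] (L : R → Ω → ℝ) (M m : R → ℝ) (d ε : ℝ)
    (hmeas : ∀ r, Measurable (L r))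
    (hindep : iIndepFun L μ)
    (hM : ∀ r, 0 ≤ M r)
    (hbdd : ∀ r, ∀ᵐ ω ∂μ, 0 ≤ L r ω ∧ L r ω ≤ M r)
    (hd : 0 < d)
    (hε0 : 0 < ε) (hε1 : ε < 1)
    (hm : ∀ r, 0 < m r ∧ m r ≤ ε * d)
    (hE : ∫ ω, ∑ r, L r ω ∂μ ≤ d) :
    ∀ N : ℝ, 1 ≤ N →
      μ {ω | (1 + ε * Real.sqrt (2 * Real.log N * ∑ r, (M r / m r) ^ 2)) * d ≤ ∑ r, L r ω}
        ≤ ENNReal.ofReal (N ^ (-4 : ℝ)) := by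
  intro N hN
  have hN0 : (0:ℝ) < N := lt_of_lt_of_le one_pos hN
  have hlogN : 0 ≤ Real.log N := Real.log_nonneg hN
  set Δ : ℝ := ∑ r, (M r / m r) ^ 2 with hΔ
  have hΔ0 : 0 ≤ Δ := Finset.sum_nonneg fun r _ => sq_nonneg _
  set c : ℝ := ε * Real.sqrt (2 * Real.log N * Δ) with hc
  have hc0 : 0 ≤ c := mul_nonneg hε0.le (Real.sqrt_nonneg _)
  set a : ℝ := (1 + c) * d with ha
  have ha0 : 0 < a := mul_pos (by linarith) hd
  set V : ℝ := ∑ r, (M r) ^ 2 with hV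
  have hV0 : 0 ≤ V := Finset.sum_nonneg fun r _ => sq_nonneg _
  have hN4 : (0:ℝ) ≤ N ^ (-4 : ℝ) := Real.rpow_nonneg hN0.le _
  have hVΔ : V ≤ ε ^ 2 * d ^ 2 * Δ := by
    rw [hV, hΔ, Finset.mul_sum]
    refine Finset.sum_le_sum fun r _ => ?_
    have hmr := (hm r).1
    have hmr2 := (hm r).2
    have : (M r) ^ 2 = (M r / m r) ^ 2 * (m r) ^ 2 := by
      field_simp
    rw [this]
    have h1 : (m r) ^ 2 ≤ (ε * d) ^ 2 := by nlinarith
    calc (M r / m r) ^ 2 * (m r) ^ 2 ≤ (M r / m r) ^ 2 * (ε * d) ^ 2 :=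
          mul_le_mul_of_nonneg_left h1 (sq_nonneg _)
      _ = ε ^ 2 * d ^ 2 * (M r / m r) ^ 2 := by ring
  rcases eq_or_lt_of_le hV0 with hVz | hVpos
  · -- V = 0 : all M r = 0, S = 0 a.s.
    have hMz : ∀ r, M r = 0 := by
      intro r
      have := (Finset.sum_eq_zero_iff_of_nonneg (fun r _ => sq_nonneg (M r))).mp hVz.symm
        r (Finset.mem_univ r)
      exact pow_eq_zero_iff (n := 2) (by norm_num) |>.mp this
    have hS0 : ∀ᵐ ω ∂μ, ∀ r, L r ω = 0 := by
      rw [MeasureTheory.ae_all_iff]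
      intro r
      filter_upwards [hbdd r] with ω ⟨h0, h1⟩
      rw [hMz r] at h1; linarith
    have hnull : μ {ω | a ≤ ∑ r, L r ω} = 0 := by
      refine measure_mono_null ?_ (ae_iff.mp (hS0.mono fun ω h => ?_) : μ {ω | ¬ ∑ r, L r ω = 0} = 0)
      · intro ω hω
        simp only [Set.mem_setOf_eq] at hω ⊢
        intro hz
        rw [hz] at hω; linarith
      · exact Finset.sum_eq_zero fun r _ => h r
    rw [ha] at hnull
    rw [hnull]
    exact zero_le
  · -- main case V > 0
    set u : ℝ := c * d with hu
    have hu0 : 0 ≤ u := mul_nonneg hc0 hd.le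
    set t : ℝ := 4 * u / V with ht
    have ht0 : 0 ≤ t := div_nonneg (by linarith) hV0
    have hint : ∀ r, Integrable (fun ω => Real.exp (t * L r ω)) μ := by
      intro r
      refine (integrable_const (Real.exp (|t| * M r))).mono'
        (((hmeas r).const_mul t).exp.aestronglyMeasurable) ?_
      filter_upwards [hbdd r] with ω ⟨h0, h1⟩
      rw [Real.norm_eq_abs, abs_of_pos (Real.exp_pos _), Real.exp_le_exp]
      calc t * L r ω ≤ |t| * L r ω := mul_le_mul_of_nonneg_right (le_abs_self t) h0
        _ ≤ |t| * M r := mul_le_mul_of_nonneg_left h1 (abs_nonneg t)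
    have hLint : ∀ r, Integrable (L r) μ := by
      intro r
      refine (integrable_const (M r)).mono' (hmeas r).aestronglyMeasurable ?_
      filter_upwards [hbdd r] with ω ⟨h0, h1⟩
      rw [Real.norm_eq_abs, abs_of_nonneg h0]; exact h1
    have hSint : Integrable (fun ω => Real.exp (t * (∑ r, L r) ω)) μ :=
      hindep.integrable_exp_mul_sum hmeas fun r _ => hint r
    have hset : {ω | a ≤ ∑ r, L r ω} = {ω | a ≤ (∑ r, L r) ω} := by
      ext ω; simp [Finset.sum_apply]
    have hchern := measure_ge_le_exp_mul_mgf (X := ∑ r, L r) (μ := μ) a ht0 hSint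
    have hES : ∑ r, ∫ ω, L r ω ∂μ ≤ d := by
      rw [← integral_finset_sum _ fun r _ => hLint r]
      exact hE
    have hmgf : mgf (∑ r, L r) μ t ≤ Real.exp (t * ∑ r, ∫ ω, L r ω ∂μ + t ^ 2 * V / 8) := by
      rw [hindep.mgf_sum hmeas]
      calc ∏ r, mgf (L r) μ t
          ≤ ∏ r, Real.exp (t * ∫ ω, L r ω ∂μ + t ^ 2 * (M r) ^ 2 / 8) :=
            Finset.prod_le_prod (fun r _ => mgf_nonneg)
              (fun r _ => mgf_le_hoeffding (hmeas r) (hM r) (hbdd r) t)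
        _ = Real.exp (∑ r, (t * ∫ ω, L r ω ∂μ + t ^ 2 * (M r) ^ 2 / 8)) :=
            (Real.exp_sum _ _).symm
        _ = Real.exp (t * ∑ r, ∫ ω, L r ω ∂μ + t ^ 2 * V / 8) := by
            rw [Finset.sum_add_distrib, ← Finset.mul_sum, hV, ← Finset.sum_div, ← Finset.mul_sum]
    have hkey : (μ {ω | a ≤ (∑ r, L r) ω}).toReal ≤ N ^ (-4 : ℝ) := by
      calc (μ {ω | a ≤ (∑ r, L r) ω}).toReal
          ≤ Real.exp (-t * a) * mgf (∑ r, L r) μ t := hchern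
        _ ≤ Real.exp (-t * a) * Real.exp (t * ∑ r, ∫ ω, L r ω ∂μ + t ^ 2 * V / 8) :=
            mul_le_mul_of_nonneg_left hmgf (Real.exp_pos _).le
        _ = Real.exp (-t * a + (t * ∑ r, ∫ ω, L r ω ∂μ + t ^ 2 * V / 8)) :=
            (Real.exp_add _ _).symm
        _ ≤ Real.exp (-t * u + t ^ 2 * V / 8) := by
            rw [Real.exp_le_exp]
            have h1 : t * ∑ r, ∫ ω, L r ω ∂μ ≤ t * d :=
              mul_le_mul_of_nonneg_left hES ht0
            have h2 : -t * a = -t * u - t * d := by rw [ha, hu]; ring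
            linarith
        _ = Real.exp (-(2 * u ^ 2 / V)) := by
            congr 1
            rw [ht]
            field_simp
            ring
        _ ≤ Real.exp (-(4 * Real.log N)) := by
            rw [Real.exp_le_exp, neg_le_neg_iff]
            rw [le_div_iff₀ hVpos]
            have hu2 : u ^ 2 = ε ^ 2 * (2 * Real.log N * Δ) * d ^ 2 := by
              have hs := Real.sq_sqrt (by positivity : (0:ℝ) ≤ 2 * Real.log N * Δ)
              calc u ^ 2 = ε ^ 2 * (Real.sqrt (2 * Real.log N * Δ)) ^ 2 * d ^ 2 := by
                    rw [hu, hc]; ring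
                _ = ε ^ 2 * (2 * Real.log N * Δ) * d ^ 2 := by rw [hs]
            have : Real.log N * V ≤ Real.log N * (ε ^ 2 * d ^ 2 * Δ) :=
              mul_le_mul_of_nonneg_left hVΔ hlogN
            nlinarith
        _ = N ^ (-4 : ℝ) := by
            rw [Real.rpow_def_of_pos hN0]
            congr 1
            ring
    rw [hset]
    rw [← ENNReal.ofReal_toReal (measure_ne_top μ _)]
    exact ENNReal.ofReal_le_ofReal hkey
end

section
/- Let R be a finite index set and let (L_r)_{r∈R} be mutually independent nonnegative real-valued random variables on a common probability space with 0 ≤ L_r ≤ M_r almost surely for constants M_r ≥ 0. Let d > 0 and let m_r be constants with 0 < m_r ≤ d for every r ∈ R, and suppose E[∑_{r∈R} L_r] ≤ 2·d. Set Δ := ∑_{r∈R} (M_r / m_r)². Then for every real N ≥ 1, P( ∑_{r∈R} L_r ≥ (2 + √((log N)·Δ))·d ) ≤ N^{−2}. -/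
open MeasureTheory ProbabilityTheory

/-- Key scalar inequality behind Hoeffding's lemma. -/
lemma hoeffding_key (p : ℝ) (hp0 : 0 ≤ p) (hp1 : p ≤ 1) (h : ℝ) :
    (1 - p) * Real.exp (-p * h) + p * Real.exp ((1 - p) * h) ≤ Real.exp (h ^ 2 / 8) := by
  set u : ℝ → ℝ := fun x => 1 - p + p * Real.exp x with hudef
  have hu : ∀ x, 0 < u x := by
    intro x
    have he := Real.exp_pos x
    show 0 < 1 - p + p * Real.exp x
    rcases le_total (Real.exp x) 1 with hc | hc <;> nlinarith
  set G : ℝ → ℝ := fun x => x / 4 + p - p * Real.exp x / u x with hGdef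
  set F : ℝ → ℝ := fun x => x ^ 2 / 8 + p * x - Real.log (u x) with hFdef
  have hu' : ∀ x, HasDerivAt u (p * Real.exp x) x := by
    intro x
    exact ((Real.hasDerivAt_exp x).const_mul p).const_add (1 - p)
  have hF : ∀ x, HasDerivAt F (G x) x := by
    intro x
    have h1 : HasDerivAt (fun x : ℝ => x ^ 2 / 8 + p * x) (x / 4 + p) x := by
      have ha : HasDerivAt (fun x : ℝ => x ^ 2 / 8) (x / 4) x := by
        have : HasDerivAt (fun x : ℝ => x ^ 2 / 8) ((2:ℕ) * x ^ (2 - 1) / 8) x := (hasDerivAt_pow 2 x).div_const 8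
        convert this using 1
        ring
      have hb : HasDerivAt (fun x : ℝ => p * x) p x := by
        simpa using (hasDerivAt_id x).const_mul p
      exact ha.add hb
    have h2 : HasDerivAt (fun x => Real.log (u x)) (p * Real.exp x / u x) x :=
      (hu' x).log (hu x).ne'
    exact h1.sub h2
  have hG : ∀ x, HasDerivAt G
      (1 / 4 - (p * Real.exp x * u x - p * Real.exp x * (p * Real.exp x)) / (u x) ^ 2) x := by
    intro x
    have hdiv : HasDerivAt (fun x => p * Real.exp x / u x)
        ((p * Real.exp x * u x - p * Real.exp x * (p * Real.exp x)) / (u x) ^ 2) x :=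
      ((Real.hasDerivAt_exp x).const_mul p).div (hu' x) (hu x).ne'
    have hlin : HasDerivAt (fun x : ℝ => x / 4 + p) (1 / 4) x := by
      simpa using ((hasDerivAt_id x).div_const 4).add_const p
    exact hlin.sub hdiv
  have hGdiff : Differentiable ℝ G := fun x => (hG x).differentiableAt
  have hGmono : Monotone G := by
    apply monotone_of_deriv_nonneg hGdiff
    intro x
    rw [(hG x).deriv]
    have he := Real.exp_pos x
    have hux := hu x
    have key : (p * Real.exp x * u x - p * Real.exp x * (p * Real.exp x)) / (u x) ^ 2
        ≤ 1 / 4 := by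
      rw [div_le_iff₀ (by positivity)]
      have hueq : u x = 1 - p + p * Real.exp x := rfl
      nlinarith [sq_nonneg ((1 - p) - p * Real.exp x)]
    linarith
  have hu0 : u 0 = 1 := by simp [hudef]
  have hG0 : G 0 = 0 := by
    simp [hGdef, hu0]
  have hF0 : F 0 = 0 := by
    simp [hFdef, hu0]
  have hFdiff : Differentiable ℝ F := fun x => (hF x).differentiableAt
  have hFnn : ∀ x, 0 ≤ F x := by
    intro x
    rcases le_total 0 x with hx | hx
    · have hmono : MonotoneOn F (Set.Ici 0) := by
        apply monotoneOn_of_deriv_nonneg (convex_Ici 0) hFdiff.continuous.continuousOn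
          hFdiff.differentiableOn
        intro y hy
        rw [(hF y).deriv]
        have : (0 : ℝ) ≤ y := le_of_lt (by simpa using hy)
        calc (0 : ℝ) = G 0 := hG0.symm
          _ ≤ G y := hGmono this
      calc (0 : ℝ) = F 0 := hF0.symm
        _ ≤ F x := hmono (by simp) (by simpa using hx) hx
    · have hanti : AntitoneOn F (Set.Iic 0) := by
        apply antitoneOn_of_deriv_nonpos (convex_Iic 0) hFdiff.continuous.continuousOn
          hFdiff.differentiableOn
        intro y hy
        rw [(hF y).deriv]
        have : y ≤ (0 : ℝ) := le_of_lt (by simpa using hy)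
        calc G y ≤ G 0 := hGmono this
          _ = 0 := hG0
      calc (0 : ℝ) = F 0 := hF0.symm
        _ ≤ F x := hanti (by simpa using hx) (by simp) hx
  have hlog : Real.log (u h) ≤ h ^ 2 / 8 + p * h := by
    have := hFnn h
    simp only [hFdef] at this
    linarith
  calc (1 - p) * Real.exp (-p * h) + p * Real.exp ((1 - p) * h)
      = Real.exp (-p * h) * u h := by
        have : (1 - p) * h = -p * h + h := by ring
        rw [this, Real.exp_add, hudef]
        ring
    _ = Real.exp (-p * h + Real.log (u h)) := by
        rw [Real.exp_add, Real.exp_log (hu h)]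
    _ ≤ Real.exp (h ^ 2 / 8) := Real.exp_le_exp.mpr (by linarith)

/-- Hoeffding's lemma: mgf bound for a centered bounded random variable. -/
lemma hoeffding_mgf_bound {Ω : Type*} [MeasurableSpace Ω] (μ : Measure Ω)
    [IsProbabilityMeasure μ] {X : Ω → ℝ} (hX : Measurable X) {a b : ℝ} (t : ℝ)
    (hab : ∀ᵐ ω ∂μ, a ≤ X ω ∧ X ω ≤ b) (h0 : ∫ ω, X ω ∂μ = 0) :
    mgf X μ t ≤ Real.exp (t ^ 2 * (b - a) ^ 2 / 8) := by
  have hXint : Integrable X μ := by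
    refine Integrable.mono' (integrable_const (max |a| |b|)) hX.aestronglyMeasurable ?_
    filter_upwards [hab] with ω hω
    rw [Real.norm_eq_abs, abs_le]
    constructor
    · have := neg_abs_le a; exact le_trans (by linarith [le_max_left |a| |b|]) hω.1
    · exact le_trans hω.2 (le_trans (le_abs_self b) (le_max_right _ _))
  have hale : a ≤ 0 := by
    have : a = ∫ _ω, a ∂μ := by simp
    rw [this, ← h0]
    exact integral_mono_ae (integrable_const a) hXint (by filter_upwards [hab] with ω h using h.1)
  have hble : 0 ≤ b := by
    have : b = ∫ _ω, b ∂μ := by simp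
    rw [this, ← h0]
    exact integral_mono_ae hXint (integrable_const b) (by filter_upwards [hab] with ω h using h.2)
  rcases eq_or_lt_of_le (hale.trans hble) with hc | hba
  · -- a = b, so a = b = 0 and X = 0 a.e.
    have ha0 : a = 0 := le_antisymm hale (by linarith)
    have hb0 : b = 0 := by linarith
    have hXe : ∀ᵐ ω ∂μ, X ω = 0 := by
      filter_upwards [hab] with ω hω
      exact le_antisymm (hb0 ▸ hω.2) (ha0 ▸ hω.1)
    have : mgf X μ t = 1 := by
      unfold mgf
      rw [integral_congr_ae (g := fun _ => (1 : ℝ)) (by filter_upwards [hXe] with ω h; simp [h])]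
      simp
    rw [this]
    exact Real.one_le_exp (by positivity)
  · -- a < b
    have hba' : (0 : ℝ) < b - a := by linarith
    have hint_exp : Integrable (fun ω => Real.exp (t * X ω)) μ := by
      refine Integrable.mono' (integrable_const (Real.exp (|t| * max |a| |b|)))
        ((hX.const_mul t).exp.aestronglyMeasurable) ?_
      filter_upwards [hab] with ω hω
      rw [Real.norm_eq_abs, abs_of_pos (Real.exp_pos _)]
      apply Real.exp_le_exp.mpr
      calc t * X ω ≤ |t * X ω| := le_abs_self _
        _ = |t| * |X ω| := abs_mul _ _
        _ ≤ |t| * max |a| |b| := by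
            apply mul_le_mul_of_nonneg_left _ (abs_nonneg t)
            rw [abs_le]
            constructor
            · have := neg_abs_le a
              exact le_trans (by linarith [le_max_left |a| |b|]) hω.1
            · exact le_trans hω.2 (le_trans (le_abs_self b) (le_max_right _ _))
    -- convexity bound pointwise
    have hconv : ∀ᵐ ω ∂μ, Real.exp (t * X ω)
        ≤ (b - X ω) * (Real.exp (t * a) / (b - a)) + (X ω - a) * (Real.exp (t * b) / (b - a)) := by
      filter_upwards [hab] with ω hω
      have hw1 : 0 ≤ (b - X ω) / (b - a) := div_nonneg (by linarith [hω.2]) hba'.le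
      have hw2 : 0 ≤ (X ω - a) / (b - a) := div_nonneg (by linarith [hω.1]) hba'.le
      have hban : b - a ≠ 0 := hba'.ne'
      have hws : (b - X ω) / (b - a) + (X ω - a) / (b - a) = 1 := by
        rw [← add_div]
        have hnum : b - X ω + (X ω - a) = b - a := by ring
        rw [hnum, div_self hban]
      have hce := convexOn_exp.2 (Set.mem_univ (t * a)) (Set.mem_univ (t * b)) hw1 hw2 hws
      simp only [smul_eq_mul] at hce
      have harg : (b - X ω) / (b - a) * (t * a) + (X ω - a) / (b - a) * (t * b) = t * X ω := by
        field_simp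
        ring
      rw [harg] at hce
      calc Real.exp (t * X ω)
          ≤ (b - X ω) / (b - a) * Real.exp (t * a) + (X ω - a) / (b - a) * Real.exp (t * b) := hce
        _ = (b - X ω) * (Real.exp (t * a) / (b - a)) + (X ω - a) * (Real.exp (t * b) / (b - a)) :=
            by ring
    have hfuneq : (fun ω => (b - X ω) * (Real.exp (t * a) / (b - a))
        + (X ω - a) * (Real.exp (t * b) / (b - a)))
        = fun ω => (Real.exp (t * b) / (b - a) - Real.exp (t * a) / (b - a)) * X ω
          + (b * (Real.exp (t * a) / (b - a)) - a * (Real.exp (t * b) / (b - a))) := by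
      ext ω; ring
    have hgint : Integrable (fun ω =>
        (b - X ω) * (Real.exp (t * a) / (b - a)) + (X ω - a) * (Real.exp (t * b) / (b - a))) μ := by
      rw [hfuneq]
      exact (hXint.const_mul _).add (integrable_const _)
    have hmgf_le : mgf X μ t
        ≤ b * (Real.exp (t * a) / (b - a)) + (-a) * (Real.exp (t * b) / (b - a)) := by
      have h1 : mgf X μ t ≤ ∫ ω, ((b - X ω) * (Real.exp (t * a) / (b - a))
          + (X ω - a) * (Real.exp (t * b) / (b - a))) ∂μ :=
        integral_mono_ae hint_exp hgint hconv
      have h2 : ∫ ω, ((b - X ω) * (Real.exp (t * a) / (b - a))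
          + (X ω - a) * (Real.exp (t * b) / (b - a))) ∂μ
          = b * (Real.exp (t * a) / (b - a)) + (-a) * (Real.exp (t * b) / (b - a)) := by
        rw [hfuneq, integral_add (hXint.const_mul _) (integrable_const _), integral_const_mul, h0,
          integral_const]
        simp
        ring
      exact h1.trans_eq h2
    -- apply the key inequality
    set p := -a / (b - a) with hpdef
    have hp0 : 0 ≤ p := div_nonneg (by linarith) hba'.le
    have hp1 : p ≤ 1 := by
      rw [hpdef, div_le_one hba']
      linarith
    have hkey := hoeffding_key p hp0 hp1 (t * (b - a))
    have hban : b - a ≠ 0 := hba'.ne'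
    have e1 : -p * (t * (b - a)) = t * a := by
      rw [hpdef]; field_simp
    have e2 : (1 - p) * (t * (b - a)) = t * b := by
      rw [hpdef]; field_simp; ring
    have e3 : 1 - p = b / (b - a) := by
      rw [hpdef]; field_simp; ring
    have e4 : (t * (b - a)) ^ 2 / 8 = t ^ 2 * (b - a) ^ 2 / 8 := by ring
    rw [e1, e2, e3, e4] at hkey
    refine hmgf_le.trans (le_trans (le_of_eq ?_) hkey)
    rw [hpdef]
    ring

/-- Node capacity violation bound in the cost-minimization variant: independent loads
`L r ∈ [0, M r]`, single-demand bounds `m r ≤ d`, expected total load at most `2 d`.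
With `Δ = ∑ (M r / m r)²`, the probability of exceeding `(2 + √((log N) Δ)) d` is at
most `N⁻²`. -/
theorem node_capacity_violation_cost {Ω : Type*} [MeasurableSpace Ω] (μ : Measure Ω)
    [IsProbabilityMeasure μ]
    {R : Type*} [Fintype R] (L : R → Ω → ℝ) (M m : R → ℝ) (d : ℝ)
    (hmeas : ∀ r, Measurable (L r))
    (hindep : iIndepFun L μ)
    (hM : ∀ r, 0 ≤ M r)
    (hbdd : ∀ r, ∀ᵐ ω ∂μ, 0 ≤ L r ω ∧ L r ω ≤ M r)
    (hd : 0 < d)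
    (hm : ∀ r, 0 < m r ∧ m r ≤ d)
    (hE : ∫ ω, ∑ r, L r ω ∂μ ≤ 2 * d) :
    ∀ N : ℝ, 1 ≤ N →
      μ {ω | (2 + Real.sqrt (Real.log N * ∑ r, (M r / m r) ^ 2)) * d ≤ ∑ r, L r ω}
        ≤ ENNReal.ofReal (N ^ (-2 : ℝ)) := by
  intro N hN
  have hN0 : (0 : ℝ) < N := lt_of_lt_of_le one_pos hN
  have hlN0 : 0 ≤ Real.log N := Real.log_nonneg hN
  set Δ := ∑ r, (M r / m r) ^ 2 with hΔdef
  have hΔ0 : 0 ≤ Δ := Finset.sum_nonneg fun r _ => sq_nonneg _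
  have hball : ∀ᵐ ω ∂μ, ∀ r, 0 ≤ L r ω ∧ L r ω ≤ M r := (ae_all_iff).mpr hbdd
  have hLint : ∀ r, Integrable (L r) μ := by
    intro r
    refine Integrable.mono' (integrable_const (M r)) (hmeas r).aestronglyMeasurable ?_
    filter_upwards [hbdd r] with ω hω
    rw [Real.norm_eq_abs, abs_le]
    exact ⟨by linarith [hω.1], hω.2⟩
  have hNrpow : N ^ (-2 : ℝ) = Real.exp (-(2 * Real.log N)) := by
    rw [Real.rpow_def_of_pos hN0]
    ring_nf
  rcases eq_or_lt_of_le hΔ0 with hΔz | hΔpos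
  · -- Δ = 0 : all M r = 0, loads a.e. zero
    have hMz : ∀ r, M r = 0 := by
      intro r
      have hterm := Finset.sum_eq_zero_iff_of_nonneg
        (fun r (_ : r ∈ Finset.univ) => sq_nonneg (M r / m r)) |>.mp hΔz.symm r (Finset.mem_univ r)
      have : M r / m r = 0 := by
        have := sq_eq_zero_iff.mp hterm
        exact this
      rcases div_eq_zero_iff.mp this with h | h
      · exact h
      · exact absurd h (hm r).1.ne'
    have hnull : μ {ω | (2 + Real.sqrt (Real.log N * Δ)) * d ≤ ∑ r, L r ω} = 0 := by
      refine measure_eq_zero_iff_ae_notMem.mpr ?_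
      filter_upwards [hball] with ω hω
      simp only [Set.mem_setOf_eq, not_le]
      have hsum : ∑ r, L r ω = 0 := by
        apply Finset.sum_eq_zero
        intro r _
        exact le_antisymm ((hMz r) ▸ (hω r).2) (hω r).1
      rw [hsum, ← hΔz]
      have hsq : Real.sqrt (Real.log N * 0) = 0 := by simp
      rw [hsq]
      nlinarith
    rw [hnull]
    exact zero_le
  · -- Δ > 0
    set s := Real.sqrt (Real.log N * Δ) with hsdef
    have hs0 : 0 ≤ s := Real.sqrt_nonneg _
    have hs2 : s ^ 2 = Real.log N * Δ := Real.sq_sqrt (mul_nonneg hlN0 hΔ0)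
    set t := 4 * s / (Δ * d) with htdef
    have ht0 : 0 ≤ t := by positivity
    have hSint : Integrable (fun ω => Real.exp (t * ∑ r, L r ω)) μ := by
      refine Integrable.mono' (integrable_const (Real.exp (t * ∑ r, M r)))
        (((Finset.measurable_sum Finset.univ fun r _ => hmeas r).const_mul t).exp.aestronglyMeasurable) ?_
      filter_upwards [hball] with ω hω
      rw [Real.norm_eq_abs, abs_of_pos (Real.exp_pos _)]
      apply Real.exp_le_exp.mpr
      exact mul_le_mul_of_nonneg_left (Finset.sum_le_sum fun r _ => (hω r).2) ht0
    have hch := measure_ge_le_exp_mul_mgf (μ := μ) (X := fun ω => ∑ r, L r ω)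
      ((2 + s) * d) ht0 hSint
    have hprod : mgf (fun ω => ∑ r, L r ω) μ t = ∏ r, mgf (L r) μ t := by
      have h2 : (fun ω => ∑ r, L r ω) = ∑ r, L r := by
        ext ω; simp
      rw [h2, hindep.mgf_sum hmeas]
    have hEL : ∀ r, 0 ≤ ∫ ω, L r ω ∂μ ∧ ∫ ω, L r ω ∂μ ≤ M r := by
      intro r
      constructor
      · apply integral_nonneg_of_ae
        filter_upwards [hbdd r] with ω hω using hω.1
      · have hle : (fun ω => L r ω) ≤ᵐ[μ] fun _ => M r := by
          filter_upwards [hbdd r] with ω hω using hω.2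
        calc ∫ ω, L r ω ∂μ ≤ ∫ _ω, M r ∂μ :=
            integral_mono_ae (hLint r) (integrable_const _) hle
          _ = M r := by simp
    have hfac : ∀ r, mgf (L r) μ t
        ≤ Real.exp (t * (∫ ω, L r ω ∂μ) + t ^ 2 * (M r) ^ 2 / 8) := by
      intro r
      set c := ∫ ω, L r ω ∂μ with hcdef
      have hcent : mgf (fun ω => L r ω - c) μ t
          ≤ Real.exp (t ^ 2 * (M r - c - -c) ^ 2 / 8) := by
        apply hoeffding_mgf_bound μ (X := fun ω => L r ω - c) ((hmeas r).sub measurable_const) t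
          (a := -c) (b := M r - c)
        · filter_upwards [hbdd r] with ω hω
          constructor <;> [linarith [hω.1]; linarith [hω.2]]
        · rw [integral_sub (hLint r) (integrable_const c)]
          simp [hcdef]
      have hshift : mgf (L r) μ t = Real.exp (t * c) * mgf (fun ω => L r ω - c) μ t := by
        unfold mgf
        rw [← integral_const_mul]
        congr 1
        ext ω
        rw [← Real.exp_add]
        ring_nf
      rw [hshift]
      calc Real.exp (t * c) * mgf (fun ω => L r ω - c) μ t
          ≤ Real.exp (t * c) * Real.exp (t ^ 2 * (M r - c - -c) ^ 2 / 8) :=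
            mul_le_mul_of_nonneg_left hcent (Real.exp_pos _).le
        _ = Real.exp (t * c + t ^ 2 * (M r) ^ 2 / 8) := by
            rw [← Real.exp_add]
            ring_nf
    have hmgf_nonneg : ∀ r, (0 : ℝ) ≤ mgf (L r) μ t := fun r => mgf_nonneg
    have hmgfS : mgf (fun ω => ∑ r, L r ω) μ t
        ≤ Real.exp (t * (∑ r, ∫ ω, L r ω ∂μ) + t ^ 2 * (∑ r, (M r) ^ 2) / 8) := by
      rw [hprod]
      calc ∏ r, mgf (L r) μ t
          ≤ ∏ r, Real.exp (t * (∫ ω, L r ω ∂μ) + t ^ 2 * (M r) ^ 2 / 8) :=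
            Finset.prod_le_prod (fun r _ => hmgf_nonneg r) (fun r _ => hfac r)
        _ = Real.exp (∑ r, (t * (∫ ω, L r ω ∂μ) + t ^ 2 * (M r) ^ 2 / 8)) :=
            (Real.exp_sum _ _).symm
        _ = Real.exp (t * (∑ r, ∫ ω, L r ω ∂μ) + t ^ 2 * (∑ r, (M r) ^ 2) / 8) := by
            congr 1
            rw [Finset.sum_add_distrib, ← Finset.mul_sum, ← Finset.sum_div, ← Finset.mul_sum]
    have hES : ∑ r, ∫ ω, L r ω ∂μ ≤ 2 * d := by
      rw [← integral_finset_sum Finset.univ fun r _ => hLint r]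
      exact hE
    have hES0 : 0 ≤ ∑ r, ∫ ω, L r ω ∂μ :=
      Finset.sum_nonneg fun r _ => (hEL r).1
    have hMsq : ∑ r, (M r) ^ 2 ≤ Δ * d ^ 2 := by
      rw [hΔdef, Finset.sum_mul]
      apply Finset.sum_le_sum
      intro r _
      have hmr := (hm r).1
      rw [div_pow, div_mul_eq_mul_div, le_div_iff₀ (by positivity)]
      have h1 : m r ^ 2 ≤ d ^ 2 := by nlinarith [(hm r).2]
      nlinarith [sq_nonneg (M r)]
    have hΔn : Δ ≠ 0 := hΔpos.ne'
    have hdn : d ≠ 0 := hd.ne'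
    have hexp_eq : -t * ((2 + s) * d) + (t * (2 * d) + t ^ 2 * (Δ * d ^ 2) / 8)
        = -(2 * Real.log N) := by
      have e1 : t * s * d = 4 * Real.log N := by
        rw [htdef]; field_simp; linear_combination hs2
      have e2 : t ^ 2 * (Δ * d ^ 2) = 16 * Real.log N := by
        rw [htdef]; field_simp; linear_combination 16 * hs2
      linear_combination (-1 : ℝ) * e1 + (1 / 8 : ℝ) * e2
    have hfinal : (μ {ω | (2 + s) * d ≤ ∑ r, L r ω}).toReal ≤ N ^ (-2 : ℝ) := by
      calc (μ {ω | (2 + s) * d ≤ ∑ r, L r ω}).toReal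
          ≤ Real.exp (-t * ((2 + s) * d)) * mgf (fun ω => ∑ r, L r ω) μ t := hch
        _ ≤ Real.exp (-t * ((2 + s) * d))
            * Real.exp (t * (∑ r, ∫ ω, L r ω ∂μ) + t ^ 2 * (∑ r, (M r) ^ 2) / 8) :=
            mul_le_mul_of_nonneg_left hmgfS (Real.exp_pos _).le
        _ = Real.exp (-t * ((2 + s) * d)
            + (t * (∑ r, ∫ ω, L r ω ∂μ) + t ^ 2 * (∑ r, (M r) ^ 2) / 8)) :=
            (Real.exp_add _ _).symm
        _ ≤ Real.exp (-t * ((2 + s) * d) + (t * (2 * d) + t ^ 2 * (Δ * d ^ 2) / 8)) := by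
            apply Real.exp_le_exp.mpr
            have h1 : t * (∑ r, ∫ ω, L r ω ∂μ) ≤ t * (2 * d) :=
              mul_le_mul_of_nonneg_left hES ht0
            have h2 : t ^ 2 * (∑ r, (M r) ^ 2) ≤ t ^ 2 * (Δ * d ^ 2) :=
              mul_le_mul_of_nonneg_left hMsq (sq_nonneg t)
            linarith
        _ = Real.exp (-(2 * Real.log N)) := by rw [hexp_eq]
        _ = N ^ (-2 : ℝ) := hNrpow.symm
    have hmne : μ {ω | (2 + s) * d ≤ ∑ r, L r ω} ≠ ⊤ := measure_ne_top μ _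
    calc μ {ω | (2 + s) * d ≤ ∑ r, L r ω}
        = ENNReal.ofReal ((μ {ω | (2 + s) * d ≤ ∑ r, L r ω}).toReal) :=
          (ENNReal.ofReal_toReal hmne).symm
      _ ≤ ENNReal.ofReal (N ^ (-2 : ℝ)) := ENNReal.ofReal_le_ofReal hfinal
end
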